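/- Let g ≠ g' be dominating vertices of G₁ and h ≠ h' be dominating vertices of G₂. Then the map interchanging (g,h) and (g',h') while fixing all other vertices is an automorphism of G₁*G₂. -/

import Mathlib

/-- The co-normal product of two simple graphs: distinct vertices are adjacent
iff the first coordinates are adjacent or the second coordinates are adjacent. -/
def conormal {α β : Type*} (G : SimpleGraph α) (H : SimpleGraph β) :
    SimpleGraph (α × β) where
  Adj x y := x ≠ y ∧ (G.Adj x.1 y.1 ∨ H.Adj x.2 y.2)
  symm := ⟨fun x y ⟨hne, h⟩ => ⟨hne.symm, h.imp (·.symm) (·.symm)⟩⟩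
  loopless := ⟨fun x ⟨h, _⟩ => h rfl⟩

lemma swap_dom_adj {V : Type*} [DecidableEq V] (G : SimpleGraph V) (a b : V)
    (ha : ∀ x, x ≠ a → G.Adj a x) (hb : ∀ x, x ≠ b → G.Adj b x) :
    ∀ p q, G.Adj p q → G.Adj (Equiv.swap a b p) (Equiv.swap a b q) := by
  intro p q hpq
  have hne : Equiv.swap a b p ≠ Equiv.swap a b q :=
    (Equiv.swap a b).injective.ne hpq.ne
  by_cases hpa : p = a
  · subst hpa
    rw [Equiv.swap_apply_left] at hne ⊢
    exact hb _ hne.symm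
  by_cases hpb : p = b
  · subst hpb
    rw [Equiv.swap_apply_right] at hne ⊢
    exact ha _ hne.symm
  rw [Equiv.swap_apply_of_ne_of_ne hpa hpb]
  by_cases hqa : q = a
  · subst hqa
    rw [Equiv.swap_apply_left]
    exact (hb _ hpb).symm
  by_cases hqb : q = b
  · subst hqb
    rw [Equiv.swap_apply_right]
    exact (ha _ hpa).symm
  rw [Equiv.swap_apply_of_ne_of_ne hqa hqb]
  exact hpq

theorem conormal_interchange_dominating {α β : Type*} [DecidableEq α] [DecidableEq β]
    (G₁ : SimpleGraph α) (G₂ : SimpleGraph β) (g g' : α) (h h' : β)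
    (hg : g ≠ g') (hh : h ≠ h')
    (hgdom : ∀ w : α, w ≠ g → G₁.Adj g w) (hg'dom : ∀ w : α, w ≠ g' → G₁.Adj g' w)
    (hhdom : ∀ w : β, w ≠ h → G₂.Adj h w) (hh'dom : ∀ w : β, w ≠ h' → G₂.Adj h' w) :
    ∃ lam : conormal G₁ G₂ ≃g conormal G₁ G₂,
      ∀ p : α × β, lam p = Equiv.swap (g, h) (g', h') p := by
  have ha : ∀ x : α × β, x ≠ (g, h) → (conormal G₁ G₂).Adj (g, h) x := by
    intro x hx
    refine ⟨Ne.symm hx, ?_⟩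
    by_cases h1 : x.1 = g
    · right
      apply hhdom
      intro h2
      exact hx (Prod.ext h1 h2)
    · left
      exact hgdom _ h1
  have hb : ∀ x : α × β, x ≠ (g', h') → (conormal G₁ G₂).Adj (g', h') x := by
    intro x hx
    refine ⟨Ne.symm hx, ?_⟩
    by_cases h1 : x.1 = g'
    · right
      apply hh'dom
      intro h2
      exact hx (Prod.ext h1 h2)
    · left
      exact hg'dom _ h1
  refine ⟨⟨Equiv.swap (g, h) (g', h'), ?_⟩, fun p => rfl⟩
  intro p q
  constructor
  · intro hpq
    have := swap_dom_adj (conormal G₁ G₂) _ _ ha hb _ _ hpq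
    simpa using this
  · exact swap_dom_adj (conormal G₁ G₂) _ _ ha hb p q
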